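/- Let A ∈ ℝ^{n×n}_{≥0} be a non-negative block matrix A = [[B, Y],[X^T, W]] where B ∈ ℝ^{d×d} has per(B) > 0, X, Y ∈ ℝ^{d×k}_{≥0}, and W ∈ ℝ^{k×k}_{≥0}. Then per(A) ≤ per(B) · per(W + X^T B* Y), where B* is the permanental inverse of B. -/

import Mathlib

open Matrix BigOperators

/-- The permanent of a square matrix. -/
noncomputable def per {α : Type*} [DecidableEq α] [Fintype α] (A : Matrix α α ℝ) : ℝ :=
  ∑ σ : Equiv.Perm α, ∏ i, A i (σ i)

/-- The permanental inverse. -/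
noncomputable def pinv {d : ℕ} (B : Matrix (Fin (d + 1)) (Fin (d + 1)) ℝ) :
    Matrix (Fin (d + 1)) (Fin (d + 1)) ℝ :=
  Matrix.of fun i j => per (B.submatrix (Fin.succAbove j) (Fin.succAbove i)) / per B

set_option linter.unusedSectionVars false
open Finset

section PsubBasics

variable {γ : Type*} {δ : Type*} [DecidableEq γ] [DecidableEq δ] [Fintype γ] [Fintype δ]

/-- permanent of the submatrix of `M` with rows `R` and columns `C`. -/
noncomputable def psub (M : γ → δ → ℝ) (R : Finset γ) (C : Finset δ) : ℝ :=
  ∑ e : {x // x ∈ R} ≃ {y // y ∈ C}, ∏ x : {x // x ∈ R}, M x.1 (e x).1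

lemma psub_nonneg {M : γ → δ → ℝ} (hM : ∀ i j, 0 ≤ M i j) (R : Finset γ) (C : Finset δ) :
    0 ≤ psub M R C := by
  refine Finset.sum_nonneg fun e _ => Finset.prod_nonneg fun x _ => hM _ _

lemma psub_of_card_ne {M : γ → δ → ℝ} {R : Finset γ} {C : Finset δ}
    (h : R.card ≠ C.card) : psub M R C = 0 := by
  have : IsEmpty ({x // x ∈ R} ≃ {y // y ∈ C}) := by
    constructor
    intro e
    exact h (by simpa [Fintype.card_coe] using Fintype.card_congr e)
  exact Finset.sum_of_isEmpty _

lemma psub_empty (M : γ → δ → ℝ) : psub M (∅ : Finset γ) (∅ : Finset δ) = 1 := by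
  have h1 : IsEmpty {x : γ // x ∈ (∅ : Finset γ)} := by simp [isEmpty_subtype]
  have h2 : IsEmpty {y : δ // y ∈ (∅ : Finset δ)} := by simp [isEmpty_subtype]
  have : Unique ({x // x ∈ (∅ : Finset γ)} ≃ {y // y ∈ (∅ : Finset δ)}) :=
    ⟨⟨Equiv.equivOfIsEmpty _ _⟩, fun e => by ext x; exact absurd x.2 (Finset.notMem_empty _)⟩
  rw [psub]
  rw [Fintype.sum_unique]
  exact Finset.prod_of_isEmpty _

lemma psub_empty_left {M : γ → δ → ℝ} {C : Finset δ} (h : C ≠ ∅) :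
    psub M (∅ : Finset γ) C = 0 := by
  refine psub_of_card_ne ?_
  simp only [Finset.card_empty]
  exact fun hc => h (Finset.card_eq_zero.mp hc.symm)

lemma psub_congr {M M' : γ → δ → ℝ} {R : Finset γ} {C : Finset δ}
    (h : ∀ x ∈ R, ∀ y ∈ C, M x y = M' x y) : psub M R C = psub M' R C := by
  refine Finset.sum_congr rfl fun e _ => Finset.prod_congr rfl fun x _ => h _ x.2 _ (e x).2

/-- Reindexing a sub-permanent along equivalences of the row and column index sets. -/
lemma psub_equiv {γ' δ' : Type*} [DecidableEq γ'] [DecidableEq δ'] [Fintype γ'] [Fintype δ']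
    {M : γ → δ → ℝ} {M' : γ' → δ' → ℝ} {R : Finset γ} {C : Finset δ}
    {R' : Finset γ'} {C' : Finset δ'}
    (eR : {x // x ∈ R'} ≃ {x // x ∈ R}) (eC : {y // y ∈ C'} ≃ {y // y ∈ C})
    (h : ∀ (x : {x // x ∈ R'}) (y : {y // y ∈ C'}), M' x.1 y.1 = M (eR x).1 (eC y).1) :
    psub M' R' C' = psub M R C := by
  rw [psub, psub]
  refine Fintype.sum_equiv (Equiv.equivCongr eR eC) _ _ fun e' => ?_
  rw [← Equiv.prod_comp eR fun x => M x.1 ((Equiv.equivCongr eR eC e') x).1]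
  refine Finset.prod_congr rfl fun x _ => ?_
  rw [h]
  simp [Equiv.equivCongr]

lemma psub_swap (M : γ → δ → ℝ) (R : Finset γ) (C : Finset δ) :
    psub (fun y x => M x y) C R = psub M R C := by
  rw [psub, psub]
  refine Fintype.sum_bijective Equiv.symm (Equiv.symm_bijective) _ _ fun e => ?_
  rw [← Equiv.prod_comp e fun x => M x.1 (e.symm x).1]
  simp

end PsubBasics

open Matrix BigOperators Finset

section Expand

variable {γ : Type*} {δ : Type*} [DecidableEq γ] [DecidableEq δ] [Fintype γ] [Fintype δ]

/-- restriction of an equivalence after removing a chosen row and its image column. -/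
def eraseEquiv {R : Finset γ} {C : Finset δ} (e : {x // x ∈ R} ≃ {y // y ∈ C})
    {j0 : γ} (hj : j0 ∈ R) {c : δ} (hc : (e ⟨j0, hj⟩).1 = c) :
    {x // x ∈ R.erase j0} ≃ {y // y ∈ C.erase c} where
  toFun z := ⟨(e ⟨z.1, Finset.mem_of_mem_erase z.2⟩).1, by
    refine Finset.mem_erase.mpr ⟨?_, (e _).2⟩
    intro hcontra
    have : e ⟨z.1, Finset.mem_of_mem_erase z.2⟩ = e ⟨j0, hj⟩ := by
      apply Subtype.ext; rw [hcontra, hc]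
    have := e.injective this
    exact (Finset.mem_erase.mp z.2).1 (congrArg Subtype.val this)⟩
  invFun z := ⟨(e.symm ⟨z.1, Finset.mem_of_mem_erase z.2⟩).1, by
    refine Finset.mem_erase.mpr ⟨?_, (e.symm _).2⟩
    intro hcontra
    have h1 : e.symm ⟨z.1, Finset.mem_of_mem_erase z.2⟩ = ⟨j0, hj⟩ := Subtype.ext hcontra
    have : z.1 = c := by
      have := congrArg (fun w => (e w).1) h1
      simpa [hc] using this
    exact (Finset.mem_erase.mp z.2).1 this⟩
  left_inv z := by apply Subtype.ext; simp
  right_inv z := by apply Subtype.ext; simp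

/-- gluing an equivalence on erased sets back, sending `j0` to `c`. -/
def glueEquiv {R : Finset γ} {C : Finset δ} {j0 : γ} (hj : j0 ∈ R) {c : δ} (hc : c ∈ C)
    (f : {x // x ∈ R.erase j0} ≃ {y // y ∈ C.erase c}) :
    {x // x ∈ R} ≃ {y // y ∈ C} where
  toFun x := if h : x.1 = j0 then ⟨c, hc⟩ else
    ⟨(f ⟨x.1, Finset.mem_erase.mpr ⟨h, x.2⟩⟩).1, Finset.mem_of_mem_erase (f _).2⟩
  invFun y := if h : y.1 = c then ⟨j0, hj⟩ else
    ⟨(f.symm ⟨y.1, Finset.mem_erase.mpr ⟨h, y.2⟩⟩).1, Finset.mem_of_mem_erase (f.symm _).2⟩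
  left_inv x := by
    by_cases h : x.1 = j0
    · simp only [h, dif_pos]
      exact (Subtype.ext h).symm
    · have hne : (f ⟨x.1, Finset.mem_erase.mpr ⟨h, x.2⟩⟩).1 ≠ c :=
        (Finset.mem_erase.mp (f _).2).1
      simp only [dif_neg h, dif_neg hne]
      apply Subtype.ext
      simp
  right_inv y := by
    by_cases h : y.1 = c
    · simp only [h, dif_pos]
      exact (Subtype.ext h).symm
    · have hne : (f.symm ⟨y.1, Finset.mem_erase.mpr ⟨h, y.2⟩⟩).1 ≠ j0 :=
        (Finset.mem_erase.mp (f.symm _).2).1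
      simp only [dif_neg h, dif_neg hne]
      apply Subtype.ext
      simp

/-- equivalence between the coercion of an erased finset and a subtype. -/
def eraseSubtypeEquiv {R : Finset γ} {j0 : γ} (hj : j0 ∈ R) :
    {x // x ∈ R.erase j0} ≃ {x : {x // x ∈ R} // x ≠ ⟨j0, hj⟩} where
  toFun z := ⟨⟨z.1, Finset.mem_of_mem_erase z.2⟩,
    fun hc => (Finset.mem_erase.mp z.2).1 (congrArg Subtype.val hc)⟩
  invFun x := ⟨x.1.1, Finset.mem_erase.mpr ⟨fun hc => x.2 (Subtype.ext hc), x.1.2⟩⟩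
  left_inv z := by apply Subtype.ext; rfl
  right_inv x := by apply Subtype.ext; apply Subtype.ext; rfl

lemma psub_expand_row (M : γ → δ → ℝ) {R : Finset γ} (C : Finset δ) {j0 : γ} (hj : j0 ∈ R) :
    psub M R C = ∑ c ∈ C, M j0 c * psub M (R.erase j0) (C.erase c) := by
  classical
  rw [psub, ← Finset.sum_coe_sort C (fun c => M j0 c * psub M (R.erase j0) (C.erase c))]
  rw [← Finset.sum_fiberwise_of_maps_to
    (g := fun e : {x // x ∈ R} ≃ {y // y ∈ C} => e ⟨j0, hj⟩) (t := Finset.univ)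
    (fun _ _ => Finset.mem_univ _)
    (fun e => ∏ x : {x // x ∈ R}, M x.1 (e x).1)]
  refine Finset.sum_congr rfl fun j _ => ?_
  rw [psub, Finset.mul_sum]
  refine Finset.sum_bij'
    (i := fun e he => eraseEquiv e hj (c := j.1)
      (by have := (Finset.mem_filter.mp he).2; rw [this]))
    (j := fun f _ => glueEquiv hj j.2 f)
    (fun _ _ => Finset.mem_univ _)
    (fun f hf => by
      refine Finset.mem_filter.mpr ⟨Finset.mem_univ _, ?_⟩
      apply Subtype.ext
      simp [glueEquiv])
    (fun e he => ?_) (fun f hf => ?_) (fun e he => ?_)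
  · -- glue (erase e) = e
    ext x
    by_cases h : x.1 = j0
    · have hx : x = ⟨j0, hj⟩ := Subtype.ext h
      subst hx
      simp only [glueEquiv, Equiv.coe_fn_mk, dif_pos]
      have := (Finset.mem_filter.mp he).2
      exact congrArg Subtype.val (by rw [this])
    · simp only [glueEquiv, Equiv.coe_fn_mk, dif_neg h, eraseEquiv]
  · -- erase (glue f) = f
    ext z
    have hz : z.1 ≠ j0 := (Finset.mem_erase.mp z.2).1
    simp only [eraseEquiv, glueEquiv, Equiv.coe_fn_mk, dif_neg hz]
  · -- products
    have key : ∏ x : {x // x ∈ R}, M x.1 (e x).1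
        = M j0 (e ⟨j0, hj⟩).1 * ∏ x ∈ Finset.univ.erase ⟨j0, hj⟩, M x.1 (e x).1 :=
      (Finset.mul_prod_erase Finset.univ (fun x : {x // x ∈ R} => M x.1 (e x).1)
        (Finset.mem_univ ⟨j0, hj⟩)).symm
    rw [key]
    have hje : (e ⟨j0, hj⟩).1 = j.1 := by
      have := (Finset.mem_filter.mp he).2; rw [this]
    rw [show M j0 (e ⟨j0, hj⟩).1 = M j0 j.1 from by rw [hje]]
    congr 1
    rw [Finset.prod_subtype (Finset.univ.erase ⟨j0, hj⟩)
      (p := fun x : {x // x ∈ R} => x ≠ ⟨j0, hj⟩) (by intro x; simp)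
      (fun x => M x.1 (e x).1)]
    -- now reindex over equiv between {x : ‥R // x ≠ ⟨j0,hj⟩} and ‥(R.erase j0)
    rw [← Equiv.prod_comp (eraseSubtypeEquiv hj)
      (fun x : {x : {x // x ∈ R} // x ≠ ⟨j0, hj⟩} => M x.1.1 (e x.1).1)]
    rfl

end Expand
section Laplace

variable {γ : Type*} {δ : Type*} [DecidableEq γ] [DecidableEq δ] [Fintype γ] [Fintype δ]

lemma psub_expand_col (M : γ → δ → ℝ) (R : Finset γ) {C : Finset δ} {c0 : δ} (hc : c0 ∈ C) :
    psub M R C = ∑ r ∈ R, M r c0 * psub M (R.erase r) (C.erase c0) := by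
  rw [← psub_swap M R C, psub_expand_row (fun y x => M x y) R hc]
  exact Finset.sum_congr rfl fun r _ => by rw [psub_swap]

lemma sum_powerset_swap {β : Type*} [AddCommMonoid β] (C : Finset δ) (f : δ → Finset δ → β) :
    ∑ V ∈ C.powerset, ∑ c ∈ V, f c V
      = ∑ c ∈ C, ∑ V' ∈ (C.erase c).powerset, f c (insert c V') := by
  rw [Finset.sum_sigma', Finset.sum_sigma']
  refine Finset.sum_bij' (i := fun x _ => (⟨x.2, x.1.erase x.2⟩ : Σ _ : δ, Finset δ))
    (j := fun y _ => (⟨insert y.1 y.2, y.1⟩ : Σ _ : Finset δ, δ)) ?_ ?_ ?_ ?_ ?_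
  · rintro ⟨V, c⟩ hx
    simp only [Finset.mem_sigma, Finset.mem_powerset] at hx ⊢
    exact ⟨hx.1 hx.2, Finset.erase_subset_erase _ hx.1⟩
  · rintro ⟨c, V'⟩ hy
    simp only [Finset.mem_sigma, Finset.mem_powerset] at hy ⊢
    constructor
    · exact Finset.insert_subset hy.1 (hy.2.trans (Finset.erase_subset _ _))
    · exact Finset.mem_insert_self _ _
  · rintro ⟨V, c⟩ hx
    simp only [Finset.mem_sigma, Finset.mem_powerset] at hx
    have : insert c (V.erase c) = V := Finset.insert_erase hx.2
    simp [this]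
  · rintro ⟨c, V'⟩ hy
    simp only [Finset.mem_sigma, Finset.mem_powerset] at hy
    have hcV : c ∉ V' := fun hc => (Finset.mem_erase.mp (hy.2 hc)).1 rfl
    simp [Finset.erase_insert hcV]
  · rintro ⟨V, c⟩ hx
    simp only [Finset.mem_sigma, Finset.mem_powerset] at hx
    rw [Finset.insert_erase hx.2]

lemma sdiff_insert_eq_erase_sdiff (R : Finset γ) (j0 : γ) (U : Finset γ) :
    R \ insert j0 U = (R.erase j0) \ U := by
  ext x
  simp only [Finset.mem_sdiff, Finset.mem_insert, Finset.mem_erase]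
  tauto

lemma psub_laplace_rows (M : γ → δ → ℝ) (U : Finset γ) :
    ∀ (R : Finset γ) (C : Finset δ), U ⊆ R →
    psub M R C = ∑ V ∈ C.powerset, psub M U V * psub M (R \ U) (C \ V) := by
  classical
  induction U using Finset.induction_on with
  | empty =>
    intro R C _
    rw [Finset.sum_eq_single (∅ : Finset δ)]
    · rw [psub_empty, Finset.sdiff_empty, Finset.sdiff_empty, one_mul]
    · intro V _ hV
      rw [psub_empty_left hV, zero_mul]
    · intro h
      exact absurd (Finset.empty_mem_powerset C) h
  | @insert j0 U' hj0 ih =>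
    intro R C hUR
    have hj0R : j0 ∈ R := hUR (Finset.mem_insert_self _ _)
    have hU'R : U' ⊆ R.erase j0 := by
      intro x hx
      exact Finset.mem_erase.mpr ⟨fun hc => hj0 (hc ▸ hx), hUR (Finset.mem_insert_of_mem hx)⟩
    rw [psub_expand_row M C hj0R]
    have rhs : ∀ V ∈ C.powerset, psub M (insert j0 U') V * psub M (R \ insert j0 U') (C \ V)
        = ∑ c ∈ V, M j0 c * psub M U' (V.erase c) * psub M (R \ insert j0 U') (C \ V) := by
      intro V _
      rw [psub_expand_row M V (Finset.mem_insert_self j0 U'), Finset.erase_insert hj0,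
        Finset.sum_mul]
    rw [Finset.sum_congr rfl rhs, sum_powerset_swap C
      (fun c V => M j0 c * psub M U' (V.erase c) * psub M (R \ insert j0 U') (C \ V))]
    refine Finset.sum_congr rfl fun c hc => ?_
    rw [ih (R.erase j0) (C.erase c) hU'R, Finset.mul_sum]
    refine Finset.sum_congr rfl fun V' hV' => ?_
    have hcV : c ∉ V' := fun hcv =>
      (Finset.mem_erase.mp ((Finset.mem_powerset.mp hV') hcv)).1 rfl
    rw [Finset.erase_insert hcV, sdiff_insert_eq_erase_sdiff R j0 U',
      sdiff_insert_eq_erase_sdiff C c V']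
    ring

lemma psub_laplace_cols (M : γ → δ → ℝ) (V0 : Finset δ) (R : Finset γ) (C : Finset δ)
    (hV : V0 ⊆ C) :
    psub M R C = ∑ U ∈ R.powerset, psub M U V0 * psub M (R \ U) (C \ V0) := by
  rw [← psub_swap M R C, psub_laplace_rows (fun y x => M x y) V0 C R hV]
  exact Finset.sum_congr rfl fun U _ => by
    rw [psub_swap M U V0, psub_swap M (R \ U) (C \ V0)]

end Laplace
section Convert

variable {γ : Type*} {δ : Type*} [DecidableEq γ] [DecidableEq δ] [Fintype γ] [Fintype δ]

/-- reindexing along finset maps. -/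
noncomputable def mapEquivFin {γ' : Type*} [DecidableEq γ'] (f : γ ↪ γ') (R : Finset γ) :
    {x // x ∈ R} ≃ {x // x ∈ R.map f} :=
  Equiv.ofBijective (fun x => ⟨f x.1, Finset.mem_map_of_mem f x.2⟩)
    ⟨fun a b hab => Subtype.ext (f.injective (congrArg Subtype.val hab)),
     fun y => by
      obtain ⟨a, ha, hfa⟩ := Finset.mem_map.mp y.2
      exact ⟨⟨a, ha⟩, Subtype.ext hfa⟩⟩

lemma psub_map {γ' δ' : Type*} [DecidableEq γ'] [DecidableEq δ'] [Fintype γ'] [Fintype δ']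
    (M : γ' → δ' → ℝ) (f : γ ↪ γ') (g : δ ↪ δ') (R : Finset γ) (C : Finset δ) :
    psub (fun a b => M (f a) (g b)) R C = psub M (R.map f) (C.map g) :=
  psub_equiv (mapEquivFin f R) (mapEquivFin g C) (fun x y => by
    simp [mapEquivFin, Equiv.ofBijective])

lemma psub_smul (M : γ → δ → ℝ) (r : ℝ) (R : Finset γ) (C : Finset δ) :
    psub (fun a b => r * M a b) R C = r ^ R.card * psub M R C := by
  rw [psub, psub, Finset.mul_sum]
  refine Finset.sum_congr rfl fun e _ => ?_
  rw [Finset.prod_mul_distrib, Finset.prod_const, Finset.card_univ, Fintype.card_coe]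

lemma per_eq_psub {α : Type*} [DecidableEq α] [Fintype α] (A : Matrix α α ℝ) :
    per A = psub (fun i j => A i j) Finset.univ Finset.univ := by
  rw [per, psub]
  refine Fintype.sum_equiv
    ((Equiv.equivCongr (Equiv.subtypeUnivEquiv (fun x : α => Finset.mem_univ x))
      (Equiv.subtypeUnivEquiv (fun x : α => Finset.mem_univ x))).symm) _ _ fun σ => ?_
  rw [← Finset.prod_coe_sort (Finset.univ : Finset α) (fun i => A i (σ i))]
  exact Finset.prod_congr rfl fun x _ => by
    congr 1

noncomputable def eraseUnivEquiv {d : ℕ} (p : Fin (d + 1)) :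
    {x // x ∈ (Finset.univ : Finset (Fin d))}
      ≃ {x // x ∈ (Finset.univ : Finset (Fin (d + 1))).erase p} :=
  (Equiv.subtypeUnivEquiv (fun x => Finset.mem_univ x)).trans
    ((finSuccAboveEquiv p).trans (Equiv.subtypeEquivRight (by
      intro x
      simp [Finset.mem_erase])))

lemma eraseUnivEquiv_val {d : ℕ} (p : Fin (d + 1)) (x) :
    (eraseUnivEquiv p x).1 = p.succAbove x.1 := by
  simp [eraseUnivEquiv, finSuccAboveEquiv, Equiv.subtypeUnivEquiv]

lemma per_minor_eq_psub {d : ℕ} (B : Matrix (Fin (d + 1)) (Fin (d + 1)) ℝ)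
    (j i : Fin (d + 1)) :
    per (B.submatrix (Fin.succAbove j) (Fin.succAbove i))
      = psub (fun a b => B a b) (Finset.univ.erase j) (Finset.univ.erase i) := by
  rw [per_eq_psub]
  refine psub_equiv (eraseUnivEquiv j) (eraseUnivEquiv i) fun x y => ?_
  simp only [Matrix.submatrix_apply]
  rw [eraseUnivEquiv_val, eraseUnivEquiv_val]

end Convert
section CB

variable {υ : Type*} {γ : Type*} {ν : Type*} [DecidableEq υ] [DecidableEq γ] [DecidableEq ν]
  [Fintype υ] [Fintype γ] [Fintype ν]

noncomputable def imageEquiv {U : Finset υ} {S : Finset γ} (g : {x // x ∈ U} → γ)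
    (hinj : Function.Injective g) (himg : Finset.image g Finset.univ = S) :
    {x // x ∈ U} ≃ {y // y ∈ S} :=
  Equiv.ofBijective (fun x => ⟨g x, himg ▸ Finset.mem_image_of_mem g (Finset.mem_univ x)⟩)
    ⟨fun a b hab => hinj (congrArg Subtype.val hab),
     fun y => by
      have : y.1 ∈ Finset.image g Finset.univ := himg ▸ y.2
      obtain ⟨x, _, hx⟩ := Finset.mem_image.mp this
      exact ⟨x, Subtype.ext hx⟩⟩

lemma imageEquiv_val {U : Finset υ} {S : Finset γ} (g : {x // x ∈ U} → γ)
    (hinj : Function.Injective g) (himg : Finset.image g Finset.univ = S) (x) :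
    (imageEquiv g hinj himg x).1 = g x := rfl

lemma cb_fiber_eq (P : υ → γ → ℝ) (Q : γ → ν → ℝ) (U : Finset υ) (V : Finset ν)
    (S : Finset γ) :
    ∑ g ∈ (Finset.univ.filter (fun g : {x // x ∈ U} → γ => Function.Injective g)).filter
        (fun g => Finset.image g Finset.univ = S),
      (∏ x : {x // x ∈ U}, P x.1 (g x))
        * ∑ e : {x // x ∈ U} ≃ {z // z ∈ V}, ∏ x : {x // x ∈ U}, Q (g x) (e x).1
      = psub P U S * psub Q S V := by
  classical
  have hmem : ∀ q ∈ ((Finset.univ.filter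
        (fun g : {x // x ∈ U} → γ => Function.Injective g)).filter
        (fun g => Finset.image g Finset.univ = S)) ×ˢ
        (Finset.univ : Finset ({x // x ∈ U} ≃ {z // z ∈ V})),
      Function.Injective q.1 ∧ Finset.image q.1 Finset.univ = S := by
    intro q hq
    have h1 := (Finset.mem_product.mp hq).1
    exact ⟨(Finset.mem_filter.mp (Finset.mem_filter.mp h1).1).2,
      (Finset.mem_filter.mp h1).2⟩
  have hjmem : ∀ p : ({x // x ∈ U} ≃ {y // y ∈ S}) × ({y // y ∈ S} ≃ {z // z ∈ V}),
      ((fun x => (p.1 x).1) : {x // x ∈ U} → γ) ∈ ((Finset.univ.filter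
        (fun g : {x // x ∈ U} → γ => Function.Injective g)).filter
        (fun g => Finset.image g Finset.univ = S)) := by
    intro p
    refine Finset.mem_filter.mpr ⟨Finset.mem_filter.mpr ⟨Finset.mem_univ _, ?_⟩, ?_⟩
    · intro a b hab
      exact p.1.injective (Subtype.ext hab)
    · ext y
      simp only [Finset.mem_image, Finset.mem_univ, true_and]
      constructor
      · rintro ⟨x, hx⟩; exact hx ▸ (p.1 x).2
      · intro hy; exact ⟨p.1.symm ⟨y, hy⟩, by simp⟩
  calc ∑ g ∈ (Finset.univ.filter (fun g : {x // x ∈ U} → γ => Function.Injective g)).filter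
        (fun g => Finset.image g Finset.univ = S),
      (∏ x : {x // x ∈ U}, P x.1 (g x))
        * ∑ e : {x // x ∈ U} ≃ {z // z ∈ V}, ∏ x : {x // x ∈ U}, Q (g x) (e x).1
      = ∑ q ∈ ((Finset.univ.filter
            (fun g : {x // x ∈ U} → γ => Function.Injective g)).filter
            (fun g => Finset.image g Finset.univ = S)) ×ˢ
            (Finset.univ : Finset ({x // x ∈ U} ≃ {z // z ∈ V})),
          (∏ x : {x // x ∈ U}, P x.1 (q.1 x)) * ∏ x : {x // x ∈ U}, Q (q.1 x) (q.2 x).1 := by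
        rw [Finset.sum_product]
        exact Finset.sum_congr rfl fun g _ => by rw [Finset.mul_sum]
    _ = ∑ p ∈ (Finset.univ : Finset ({x // x ∈ U} ≃ {y // y ∈ S})) ×ˢ
            (Finset.univ : Finset ({y // y ∈ S} ≃ {z // z ∈ V})),
          (∏ x : {x // x ∈ U}, P x.1 (p.1 x).1) * ∏ z : {y // y ∈ S}, Q z.1 (p.2 z).1 := by
        refine Finset.sum_bij'
          (i := fun q hq => (imageEquiv q.1 (hmem q hq).1 (hmem q hq).2,
            (imageEquiv q.1 (hmem q hq).1 (hmem q hq).2).symm.trans q.2))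
          (j := fun p _ => ((fun x => (p.1 x).1), p.1.trans p.2))
          (fun _ _ => by simp) ?_ ?_ ?_ ?_
        · intro p _
          exact Finset.mem_product.mpr ⟨hjmem p, Finset.mem_univ _⟩
        · intro q hq
          refine Prod.ext ?_ ?_
          · funext x; rfl
          · show (imageEquiv q.1 (hmem q hq).1 (hmem q hq).2).trans
              ((imageEquiv q.1 (hmem q hq).1 (hmem q hq).2).symm.trans q.2) = q.2
            ext z; simp
        · intro p hp
          have hie : ∀ h1 h2, imageEquiv (fun x => (p.1 x).1) h1 h2 = p.1 :=
            fun h1 h2 => Equiv.ext fun x => Subtype.ext rfl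
          have h1x : Function.Injective (fun x => (p.1 x).1) :=
            (Finset.mem_filter.mp (Finset.mem_filter.mp (hjmem p)).1).2
          have h2x : Finset.image (fun x => (p.1 x).1) Finset.univ = S :=
            (Finset.mem_filter.mp (hjmem p)).2
          refine Prod.ext ?_ ?_
          · exact hie h1x h2x
          · show (imageEquiv _ _ _).symm.trans (p.1.trans p.2) = p.2
            rw [hie h1x h2x]
            ext z; simp
        · intro q hq
          congr 1
          rw [← Equiv.prod_comp (imageEquiv q.1 (hmem q hq).1 (hmem q hq).2)
            (fun z => Q z.1 ((imageEquiv q.1 (hmem q hq).1 (hmem q hq).2).symm.trans q.2 z).1)]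
          refine Finset.prod_congr rfl fun x _ => ?_
          simp [imageEquiv_val]
    _ = psub P U S * psub Q S V := by
        rw [Finset.sum_product, psub, psub, Finset.sum_mul_sum]

lemma psub_cauchy_binet (P : υ → γ → ℝ) (Q : γ → ν → ℝ)
    (hP : ∀ i j, 0 ≤ P i j) (hQ : ∀ i j, 0 ≤ Q i j) (U : Finset υ) (V : Finset ν) :
    ∑ S : Finset γ, psub P U S * psub Q S V
      ≤ psub (fun u v => ∑ s : γ, P u s * Q s v) U V := by
  classical
  have expand : psub (fun u v => ∑ s : γ, P u s * Q s v) U V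
      = ∑ g : {x // x ∈ U} → γ,
          (∏ x : {x // x ∈ U}, P x.1 (g x))
            * ∑ e : {x // x ∈ U} ≃ {z // z ∈ V}, ∏ x : {x // x ∈ U}, Q (g x) (e x).1 := by
    rw [psub]
    calc ∑ e : {x // x ∈ U} ≃ {z // z ∈ V}, ∏ x : {x // x ∈ U}, ∑ s : γ, P x.1 s * Q s (e x).1
        = ∑ e : {x // x ∈ U} ≃ {z // z ∈ V}, ∑ g : {x // x ∈ U} → γ,
            ∏ x : {x // x ∈ U}, P x.1 (g x) * Q (g x) (e x).1 := by
          refine Finset.sum_congr rfl fun e _ => ?_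
          rw [Finset.prod_univ_sum, Fintype.piFinset_univ]
      _ = ∑ g : {x // x ∈ U} → γ, ∑ e : {x // x ∈ U} ≃ {z // z ∈ V},
            ∏ x : {x // x ∈ U}, P x.1 (g x) * Q (g x) (e x).1 := Finset.sum_comm
      _ = ∑ g : {x // x ∈ U} → γ,
          (∏ x : {x // x ∈ U}, P x.1 (g x))
            * ∑ e : {x // x ∈ U} ≃ {z // z ∈ V}, ∏ x : {x // x ∈ U}, Q (g x) (e x).1 := by
          refine Finset.sum_congr rfl fun g _ => ?_
          rw [Finset.mul_sum]
          exact Finset.sum_congr rfl fun e _ => Finset.prod_mul_distrib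
  rw [expand]
  have step2 : ∑ S : Finset γ, psub P U S * psub Q S V
      = ∑ g ∈ Finset.univ.filter (fun g : {x // x ∈ U} → γ => Function.Injective g),
          (∏ x : {x // x ∈ U}, P x.1 (g x))
            * ∑ e : {x // x ∈ U} ≃ {z // z ∈ V}, ∏ x : {x // x ∈ U}, Q (g x) (e x).1 := by
    rw [← Finset.sum_fiberwise_of_maps_to
      (g := fun g : {x // x ∈ U} → γ => Finset.image g Finset.univ)
      (t := (Finset.univ : Finset (Finset γ))) (fun _ _ => Finset.mem_univ _)]
    refine Finset.sum_congr rfl fun S _ => ?_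
    rw [Finset.filter_filter] at *
    rw [← cb_fiber_eq P Q U V S, Finset.filter_filter]
  rw [step2]
  refine Finset.sum_le_sum_of_subset_of_nonneg (Finset.filter_subset _ _) ?_
  intro g _ _
  refine mul_nonneg (Finset.prod_nonneg fun x _ => hP _ _)
    (Finset.sum_nonneg fun e _ => Finset.prod_nonneg fun x _ => hQ _ _)

end CB
section ChainLemma

variable {γ : Type*} [DecidableEq γ] [Fintype γ]

lemma L6gen (B : γ → γ → ℝ) (hB : ∀ i j, 0 ≤ B i j) :
    ∀ n : ℕ, ∀ T T' R C : Finset γ, ∀ c0 : γ, T.card = n → T ⊆ R → c0 ∈ T' → c0 ∉ C →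
      T'.erase c0 ⊆ C →
      psub B R C * psub B T T' ≤
        ∑ i ∈ C \ T', psub B R (insert c0 (C.erase i)) * psub B T (insert i (T'.erase c0)) := by
  intro n
  induction n with
  | zero =>
    intro T T' R C c0 hcard _ hc0T' _ _
    have hT : T = ∅ := Finset.card_eq_zero.mp hcard
    subst hT
    have hz : psub B (∅ : Finset γ) T' = 0 := by
      refine psub_empty_left fun h => ?_
      rw [h] at hc0T'
      exact absurd hc0T' (Finset.notMem_empty _)
    rw [hz, mul_zero]
    exact Finset.sum_nonneg fun i _ =>
      mul_nonneg (psub_nonneg hB _ _) (psub_nonneg hB _ _)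
  | succ n ih =>
    intro T T' R C c0 hcard hTR hc0T' hc0C hT'C
    have hCsplit : (C \ T') ∪ (T'.erase c0) = C := by
      ext x
      simp only [Finset.mem_union, Finset.mem_sdiff, Finset.mem_erase]
      constructor
      · rintro (⟨h1, _⟩ | ⟨h1, h2⟩)
        · exact h1
        · exact hT'C (Finset.mem_erase.mpr ⟨h1, h2⟩)
      · intro hxC
        by_cases hxT' : x ∈ T'
        · exact Or.inr ⟨fun hxc => hc0C (hxc ▸ hxC), hxT'⟩
        · exact Or.inl ⟨hxC, hxT'⟩
    have hdisj : Disjoint (C \ T') (T'.erase c0) := by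
      rw [Finset.disjoint_left]
      intro x hx hx'
      exact (Finset.mem_sdiff.mp hx).2 (Finset.mem_erase.mp hx').2
    have claim : ∀ t ∈ T, psub B R C * psub B (T.erase t) (T'.erase c0)
        ≤ ∑ i ∈ C \ T',
            psub B (R.erase t) (C.erase i) * psub B T (insert i (T'.erase c0)) := by
      intro t ht
      have htR : t ∈ R := hTR ht
      have hexp : psub B R C * psub B (T.erase t) (T'.erase c0)
          = (∑ c1 ∈ C \ T', B t c1 * psub B (R.erase t) (C.erase c1)
              * psub B (T.erase t) (T'.erase c0))
            + ∑ c1 ∈ T'.erase c0, B t c1 * psub B (R.erase t) (C.erase c1)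
              * psub B (T.erase t) (T'.erase c0) := by
        rw [psub_expand_row B C htR, Finset.sum_mul, ← hCsplit, Finset.sum_union hdisj,
          hCsplit]
      rw [hexp]
      have hrhs : ∀ i ∈ C \ T', psub B T (insert i (T'.erase c0))
          = B t i * psub B (T.erase t) (T'.erase c0)
            + ∑ c ∈ T'.erase c0, B t c * psub B (T.erase t)
                (insert i ((T'.erase c0).erase c)) := by
        intro i hi
        have hiT' : i ∉ T'.erase c0 := fun h =>
          (Finset.mem_sdiff.mp hi).2 (Finset.mem_erase.mp h).2
        rw [psub_expand_row B (insert i (T'.erase c0)) ht, Finset.sum_insert hiT',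
          Finset.erase_insert hiT']
        congr 1
        refine Finset.sum_congr rfl fun c hc => ?_
        rw [Finset.erase_insert_of_ne (fun h => hiT' (by rw [h]; exact hc))]
      have hsum : ∑ i ∈ C \ T',
            psub B (R.erase t) (C.erase i) * psub B T (insert i (T'.erase c0))
          = (∑ i ∈ C \ T', B t i * psub B (R.erase t) (C.erase i)
              * psub B (T.erase t) (T'.erase c0))
            + ∑ c ∈ T'.erase c0, B t c * ∑ i ∈ C \ T',
                psub B (R.erase t) (C.erase i)
                  * psub B (T.erase t) (insert i ((T'.erase c0).erase c)) := by
        rw [Finset.sum_congr rfl (fun i hi => by rw [hrhs i hi, mul_add])]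
        rw [Finset.sum_add_distrib]
        congr 1
        · exact Finset.sum_congr rfl fun i _ => by ring
        · calc ∑ i ∈ C \ T', psub B (R.erase t) (C.erase i)
                * ∑ c ∈ T'.erase c0, B t c
                  * psub B (T.erase t) (insert i ((T'.erase c0).erase c))
              = ∑ i ∈ C \ T', ∑ c ∈ T'.erase c0, B t c
                  * (psub B (R.erase t) (C.erase i)
                    * psub B (T.erase t) (insert i ((T'.erase c0).erase c))) := by
                refine Finset.sum_congr rfl fun i _ => ?_
                rw [Finset.mul_sum]
                exact Finset.sum_congr rfl fun c _ => by ring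
            _ = ∑ c ∈ T'.erase c0, ∑ i ∈ C \ T', B t c
                  * (psub B (R.erase t) (C.erase i)
                    * psub B (T.erase t) (insert i ((T'.erase c0).erase c))) :=
                Finset.sum_comm
            _ = ∑ c ∈ T'.erase c0, B t c * ∑ i ∈ C \ T',
                  psub B (R.erase t) (C.erase i)
                    * psub B (T.erase t) (insert i ((T'.erase c0).erase c)) := by
                refine Finset.sum_congr rfl fun c _ => ?_
                rw [Finset.mul_sum]
      rw [hsum]
      refine add_le_add_right ?_ _
      refine Finset.sum_le_sum fun c1 hc1 => ?_
      rw [mul_assoc]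
      refine mul_le_mul_of_nonneg_left ?_ (hB t c1)
      -- apply the induction hypothesis
      have hc1T' : c1 ∈ T' := (Finset.mem_erase.mp hc1).2
      have hc1C : c1 ∈ C := hT'C hc1
      have hidx : (C.erase c1) \ (T'.erase c0) = C \ T' := by
        ext x
        simp only [Finset.mem_sdiff, Finset.mem_erase, not_and]
        constructor
        · rintro ⟨⟨hxc1, hxC⟩, hnot⟩
          refine ⟨hxC, fun hxT' => ?_⟩
          exact (hnot (fun hxc0 => hc0C (hxc0 ▸ hxC))) hxT'
        · rintro ⟨hxC, hxT'⟩
          exact ⟨⟨fun h => hxT' (h ▸ hc1T'), hxC⟩, fun _ h => hxT' h⟩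
      have hins : ∀ i ∈ C \ T', insert c1 ((C.erase c1).erase i) = C.erase i := by
        intro i hi
        have hic1 : i ≠ c1 := fun h => (Finset.mem_sdiff.mp hi).2 (h ▸ hc1T')
        rw [Finset.erase_right_comm]
        exact Finset.insert_erase (Finset.mem_erase.mpr ⟨fun h => hic1 h.symm, hc1C⟩)
      have h0 := ih (T.erase t) (T'.erase c0) (R.erase t) (C.erase c1) c1
        (by rw [Finset.card_erase_of_mem ht, hcard]; rfl)
        (Finset.erase_subset_erase t hTR) hc1 (Finset.notMem_erase _ _)
        (fun x hx => Finset.mem_erase.mpr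
          ⟨(Finset.mem_erase.mp hx).1, hT'C (Finset.mem_erase.mp hx).2⟩)
      rw [hidx] at h0
      refine h0.trans (le_of_eq (Finset.sum_congr rfl fun i hi => ?_))
      rw [hins i hi]
    -- assemble
    calc psub B R C * psub B T T'
        = ∑ t ∈ T, B t c0 * (psub B R C * psub B (T.erase t) (T'.erase c0)) := by
          rw [psub_expand_col B T hc0T', Finset.mul_sum]
          exact Finset.sum_congr rfl fun t _ => by ring
      _ ≤ ∑ t ∈ T, B t c0 * ∑ i ∈ C \ T',
            psub B (R.erase t) (C.erase i) * psub B T (insert i (T'.erase c0)) := by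
          refine Finset.sum_le_sum fun t ht => ?_
          exact mul_le_mul_of_nonneg_left (claim t ht) (hB t c0)
      _ = ∑ i ∈ C \ T', (∑ t ∈ T, B t c0 * psub B (R.erase t) (C.erase i))
            * psub B T (insert i (T'.erase c0)) := by
          rw [Finset.sum_congr rfl (fun t (_ : t ∈ T) => Finset.mul_sum _ _ _)]
          rw [Finset.sum_comm]
          refine Finset.sum_congr rfl fun i _ => ?_
          rw [Finset.sum_mul]
          exact Finset.sum_congr rfl fun t _ => by ring
      _ ≤ ∑ i ∈ C \ T', (∑ r ∈ R, B r c0 * psub B (R.erase r) (C.erase i))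
            * psub B T (insert i (T'.erase c0)) := by
          refine Finset.sum_le_sum fun i _ => ?_
          refine mul_le_mul_of_nonneg_right ?_ (psub_nonneg hB _ _)
          refine Finset.sum_le_sum_of_subset_of_nonneg hTR fun r _ _ =>
            mul_nonneg (hB _ _) (psub_nonneg hB _ _)
      _ = ∑ i ∈ C \ T', psub B R (insert c0 (C.erase i))
            * psub B T (insert i (T'.erase c0)) := by
          refine Finset.sum_congr rfl fun i _ => ?_
          congr 1
          rw [psub_expand_col B R (Finset.mem_insert_self c0 (C.erase i))]
          refine Finset.sum_congr rfl fun r _ => ?_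
          rw [Finset.erase_insert (fun h => hc0C (Finset.mem_of_mem_erase h))]

end ChainLemma
section L5L4

variable {γ : Type*} [DecidableEq γ] [Fintype γ]

lemma L5 (B : γ → γ → ℝ) (hB : ∀ i j, 0 ≤ B i j) (T T' : Finset γ) (j0 : γ)
    (hj0 : j0 ∉ T) :
    psub B Finset.univ Finset.univ * psub B T T' ≤
      ∑ i ∈ Finset.univ \ T',
        psub B (Finset.univ.erase j0) (Finset.univ.erase i)
          * psub B (insert j0 T) (insert i T') := by
  classical
  have hsplit : (Finset.univ \ T') ∪ T' = Finset.univ := by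
    ext x; simp [em]
  have hdisj : Disjoint (Finset.univ \ T') T' := by
    rw [Finset.disjoint_left]
    intro x hx hx'
    exact (Finset.mem_sdiff.mp hx).2 hx'
  -- expand LHS along row j0 of the full matrix
  have hLHS : psub B Finset.univ Finset.univ * psub B T T'
      = (∑ c0 ∈ Finset.univ \ T', B j0 c0
          * (psub B (Finset.univ.erase j0) (Finset.univ.erase c0) * psub B T T'))
        + ∑ c0 ∈ T', B j0 c0
          * (psub B (Finset.univ.erase j0) (Finset.univ.erase c0) * psub B T T') := by
    rw [psub_expand_row B Finset.univ (Finset.mem_univ j0), Finset.sum_mul,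
      ← hsplit, Finset.sum_union hdisj, hsplit]
    congr 1 <;> exact Finset.sum_congr rfl fun c0 _ => by ring
  -- expand the RHS factor along row j0
  have hRHS : ∀ i ∈ Finset.univ \ T', psub B (insert j0 T) (insert i T')
      = B j0 i * psub B T T'
        + ∑ c ∈ T', B j0 c * psub B T (insert i (T'.erase c)) := by
    intro i hi
    have hiT' : i ∉ T' := (Finset.mem_sdiff.mp hi).2
    rw [psub_expand_row B (insert i T') (Finset.mem_insert_self j0 (T)),
      Finset.erase_insert hj0, Finset.sum_insert hiT', Finset.erase_insert hiT']
    congr 1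
    refine Finset.sum_congr rfl fun c hc => ?_
    rw [Finset.erase_insert_of_ne (fun h => hiT' (by rw [h]; exact hc))]
  have hRHSsum : ∑ i ∈ Finset.univ \ T',
        psub B (Finset.univ.erase j0) (Finset.univ.erase i)
          * psub B (insert j0 T) (insert i T')
      = (∑ i ∈ Finset.univ \ T', B j0 i
          * (psub B (Finset.univ.erase j0) (Finset.univ.erase i) * psub B T T'))
        + ∑ c ∈ T', B j0 c * ∑ i ∈ Finset.univ \ T',
            psub B (Finset.univ.erase j0) (Finset.univ.erase i)
              * psub B T (insert i (T'.erase c)) := by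
    rw [Finset.sum_congr rfl (fun i hi => by rw [hRHS i hi, mul_add])]
    rw [Finset.sum_add_distrib]
    congr 1
    · exact Finset.sum_congr rfl fun i _ => by ring
    · calc ∑ i ∈ Finset.univ \ T',
            psub B (Finset.univ.erase j0) (Finset.univ.erase i)
              * ∑ c ∈ T', B j0 c * psub B T (insert i (T'.erase c))
          = ∑ i ∈ Finset.univ \ T', ∑ c ∈ T', B j0 c
              * (psub B (Finset.univ.erase j0) (Finset.univ.erase i)
                * psub B T (insert i (T'.erase c))) := by
            refine Finset.sum_congr rfl fun i _ => ?_
            rw [Finset.mul_sum]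
            exact Finset.sum_congr rfl fun c _ => by ring
        _ = ∑ c ∈ T', ∑ i ∈ Finset.univ \ T', B j0 c
              * (psub B (Finset.univ.erase j0) (Finset.univ.erase i)
                * psub B T (insert i (T'.erase c))) := Finset.sum_comm
        _ = ∑ c ∈ T', B j0 c * ∑ i ∈ Finset.univ \ T',
              psub B (Finset.univ.erase j0) (Finset.univ.erase i)
                * psub B T (insert i (T'.erase c)) := by
            refine Finset.sum_congr rfl fun c _ => ?_
            rw [Finset.mul_sum]
  rw [hLHS, hRHSsum]
  refine add_le_add_right ?_ _
  refine Finset.sum_le_sum fun c0 hc0 => ?_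
  refine mul_le_mul_of_nonneg_left ?_ (hB j0 c0)
  -- use L6gen
  have h0 := L6gen B hB T.card T T' (Finset.univ.erase j0) (Finset.univ.erase c0) c0
    rfl
    (fun x hx => Finset.mem_erase.mpr ⟨fun h => hj0 (h ▸ hx), Finset.mem_univ _⟩)
    hc0 (Finset.notMem_erase _ _)
    (fun x hx => Finset.mem_erase.mpr ⟨(Finset.mem_erase.mp hx).1, Finset.mem_univ _⟩)
  have hidx : (Finset.univ.erase c0) \ T' = Finset.univ \ T' := by
    ext x
    simp only [Finset.mem_sdiff, Finset.mem_erase, Finset.mem_univ, true_and, and_true]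
    constructor
    · rintro ⟨_, h2⟩; exact h2
    · intro h; exact ⟨fun hx => h (hx ▸ hc0), h⟩
  have hins : ∀ i ∈ Finset.univ \ T',
      insert c0 ((Finset.univ.erase c0).erase i) = Finset.univ.erase i := by
    intro i hi
    have hic0 : i ≠ c0 := fun h => (Finset.mem_sdiff.mp hi).2 (h ▸ hc0)
    rw [Finset.erase_right_comm]
    exact Finset.insert_erase (Finset.mem_erase.mpr ⟨fun h => hic0 h.symm, Finset.mem_univ _⟩)
  rw [hidx] at h0
  refine h0.trans (le_of_eq (Finset.sum_congr rfl fun i hi => ?_))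
  rw [hins i hi]

lemma L4 (B : γ → γ → ℝ) (hB : ∀ i j, 0 ≤ B i j) :
    ∀ n : ℕ, ∀ S S' : Finset γ, S.card = n →
      psub B Finset.univ Finset.univ ^ n * psub B Sᶜ S'ᶜ
        ≤ psub B Finset.univ Finset.univ
          * psub (fun i j => psub B (Finset.univ.erase j) (Finset.univ.erase i)) S' S := by
  classical
  have hadj : ∀ i j : γ, 0 ≤ psub B (Finset.univ.erase j) (Finset.univ.erase i) :=
    fun i j => psub_nonneg hB _ _
  intro n
  induction n with
  | zero =>
    intro S S' hcard
    have hS : S = ∅ := Finset.card_eq_zero.mp hcard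
    subst hS
    by_cases hS' : S' = ∅
    · subst hS'
      rw [psub_empty, pow_zero, one_mul, Finset.compl_empty, mul_one]
    · have h1 : psub B (∅ : Finset γ)ᶜ S'ᶜ = 0 := by
        refine psub_of_card_ne ?_
        rw [Finset.compl_empty, Finset.card_compl, Finset.card_univ]
        have h4 : S'.card ≤ Fintype.card γ := Finset.card_le_univ _
        have : 0 < S'.card := Finset.card_pos.mpr (Finset.nonempty_of_ne_empty hS')
        omega
      rw [h1, mul_zero]
      exact mul_nonneg (psub_nonneg hB _ _) (psub_nonneg hadj _ _)
  | succ n ih =>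
    intro S S' hcard
    have hSne : S.Nonempty := Finset.card_pos.mp (by omega)
    obtain ⟨j0, hj0⟩ := hSne
    by_cases hcc : S'.card = S.card
    case neg =>
      have h1 : psub B Sᶜ S'ᶜ = 0 := by
        refine psub_of_card_ne ?_
        rw [Finset.card_compl, Finset.card_compl]
        have h2 : S.card ≤ Fintype.card γ := Finset.card_le_card (Finset.subset_univ _)
        have h3 : S'.card ≤ Fintype.card γ := Finset.card_le_card (Finset.subset_univ _)
        omega
      rw [h1, mul_zero]
      exact mul_nonneg (psub_nonneg hB _ _) (psub_nonneg hadj _ _)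
    case pos =>
      have hexp : psub (fun i j => psub B (Finset.univ.erase j) (Finset.univ.erase i)) S' S
          = ∑ i ∈ S', psub B (Finset.univ.erase j0) (Finset.univ.erase i)
              * psub (fun i j => psub B (Finset.univ.erase j) (Finset.univ.erase i))
                  (S'.erase i) (S.erase j0) :=
        psub_expand_col _ S' hj0
      calc psub B Finset.univ Finset.univ ^ (n + 1) * psub B Sᶜ S'ᶜ
          = psub B Finset.univ Finset.univ ^ n
            * (psub B Finset.univ Finset.univ * psub B Sᶜ S'ᶜ) := by ring
        _ ≤ psub B Finset.univ Finset.univ ^ n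
            * ∑ i ∈ Finset.univ \ S'ᶜ,
              psub B (Finset.univ.erase j0) (Finset.univ.erase i)
                * psub B (insert j0 Sᶜ) (insert i S'ᶜ) := by
            refine mul_le_mul_of_nonneg_left ?_
              (pow_nonneg (psub_nonneg hB _ _) n)
            exact L5 B hB Sᶜ S'ᶜ j0 (fun h => (Finset.mem_compl.mp h) hj0)
        _ = ∑ i ∈ S', psub B (Finset.univ.erase j0) (Finset.univ.erase i)
              * (psub B Finset.univ Finset.univ ^ n
                * psub B (S.erase j0)ᶜ (S'.erase i)ᶜ) := by
            have hidx : Finset.univ \ S'ᶜ = S' := by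
              ext x; simp
            rw [hidx, Finset.mul_sum]
            refine Finset.sum_congr rfl fun i _ => ?_
            rw [Finset.compl_erase, Finset.compl_erase]
            ring
        _ ≤ ∑ i ∈ S', psub B (Finset.univ.erase j0) (Finset.univ.erase i)
              * (psub B Finset.univ Finset.univ
                * psub (fun i j => psub B (Finset.univ.erase j) (Finset.univ.erase i))
                    (S'.erase i) (S.erase j0)) := by
            refine Finset.sum_le_sum fun i _ => ?_
            refine mul_le_mul_of_nonneg_left ?_ (hadj i j0)
            exact ih (S.erase j0) (S'.erase i)
              (by rw [Finset.card_erase_of_mem hj0, hcard]; rfl)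
        _ = psub B Finset.univ Finset.univ
            * psub (fun i j => psub B (Finset.univ.erase j) (Finset.univ.erase i)) S' S := by
            rw [hexp, Finset.mul_sum]
            exact Finset.sum_congr rfl fun i _ => by ring

end L5L4
section M2

variable {κ : Type*} [DecidableEq κ] [Fintype κ]

lemma per_add_split (W N : Matrix κ κ ℝ) :
    per (W + N) = ∑ U ∈ (Finset.univ : Finset κ).powerset,
      ∑ V ∈ (Finset.univ : Finset κ).powerset,
        psub (fun b c => N b c) U V
          * psub (fun b c => W b c) (Finset.univ \ U) (Finset.univ \ V) := by
  classical
  rw [per]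
  have h1 : ∀ σ : Equiv.Perm κ, (∏ b, (W + N) b (σ b))
      = ∑ U ∈ (Finset.univ : Finset κ).powerset,
          (∏ b ∈ U, N b (σ b)) * ∏ b ∈ Finset.univ \ U, W b (σ b) := by
    intro σ
    have := Finset.prod_add (fun b => N b (σ b)) (fun b => W b (σ b)) Finset.univ
    rw [← this]
    exact Finset.prod_congr rfl fun b _ => by
      rw [Matrix.add_apply]; ring
  rw [Finset.sum_congr rfl fun σ _ => h1 σ, Finset.sum_comm]
  refine Finset.sum_congr rfl fun U hU => ?_
  -- fixed U
  have h2 : ∀ σ : Equiv.Perm κ, (∏ b ∈ U, N b (σ b)) * ∏ b ∈ Finset.univ \ U, W b (σ b)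
      = ∏ b : κ, (fun b c => if b ∈ U then N b c else W b c) b (σ b) := by
    intro σ
    have ha : (∏ b ∈ U, N b (σ b))
        = ∏ b ∈ U, (if b ∈ U then N b (σ b) else W b (σ b)) :=
      Finset.prod_congr rfl fun b hb => by simp [hb]
    have hb2 : (∏ b ∈ Finset.univ \ U, W b (σ b))
        = ∏ b ∈ Finset.univ \ U, (if b ∈ U then N b (σ b) else W b (σ b)) :=
      Finset.prod_congr rfl fun b hb => by simp [(Finset.mem_sdiff.mp hb).2]
    rw [ha, hb2, mul_comm, Finset.prod_sdiff (Finset.subset_univ U)]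
  rw [Finset.sum_congr rfl fun σ _ => h2 σ]
  have h3 : (∑ σ : Equiv.Perm κ, ∏ b : κ,
        (fun b c => if b ∈ U then N b c else W b c) b (σ b))
      = per (Matrix.of fun b c => if b ∈ U then N b c else W b c) := rfl
  rw [h3, per_eq_psub, psub_laplace_rows _ U Finset.univ Finset.univ (Finset.subset_univ U)]
  refine Finset.sum_congr rfl fun V hV => ?_
  congr 1
  · refine psub_congr fun x hx y _ => ?_
    simp [hx]
  · refine psub_congr fun x hx y _ => ?_
    simp [(Finset.mem_sdiff.mp hx).2]

end M2

section PowersetHelpers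

variable {α : Type*} {β : Type*} [DecidableEq α] [DecidableEq β]

lemma sum_powerset_map {M : Type*} [AddCommMonoid M] (f : α ↪ β) (s : Finset α)
    (F : Finset β → M) :
    ∑ V ∈ (s.map f).powerset, F V = ∑ T ∈ s.powerset, F (T.map f) := by
  have key : ∀ V ∈ (s.map f).powerset, (s.filter (fun a => f a ∈ V)).map f = V := by
    intro V hV
    ext b
    simp only [Finset.mem_map, Finset.mem_filter]
    constructor
    · rintro ⟨a, ⟨_, h2⟩, h3⟩; exact h3 ▸ h2
    · intro hb
      obtain ⟨a, ha, hfa⟩ := Finset.mem_map.mp (Finset.mem_powerset.mp hV hb)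
      exact ⟨a, ⟨ha, hfa ▸ hb⟩, hfa⟩
  refine Finset.sum_bij' (i := fun V _ => s.filter (fun a => f a ∈ V))
    (j := fun T _ => T.map f) ?_ ?_ ?_ ?_ ?_
  · intro V _
    exact Finset.mem_powerset.mpr (Finset.filter_subset _ _)
  · intro T hT
    exact Finset.mem_powerset.mpr (Finset.map_subset_map.mpr (Finset.mem_powerset.mp hT))
  · exact key
  · intro T hT
    ext a
    simp only [Finset.mem_filter, Finset.mem_map]
    constructor
    · rintro ⟨_, a', ha', hfa⟩
      rwa [← f.injective hfa]
    · intro ha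
      exact ⟨Finset.mem_powerset.mp hT ha, a, ha, rfl⟩
  · intro V hV
    rw [key V hV]

lemma sum_powerset_union_disjoint {M : Type*} [AddCommMonoid M] (s t : Finset β)
    (hdisj : Disjoint s t) (F : Finset β → M) :
    ∑ V ∈ (s ∪ t).powerset, F V
      = ∑ V1 ∈ s.powerset, ∑ V2 ∈ t.powerset, F (V1 ∪ V2) := by
  rw [← Finset.sum_product']
  refine Finset.sum_bij' (i := fun V _ => (V ∩ s, V ∩ t))
    (j := fun p _ => p.1 ∪ p.2) ?_ ?_ ?_ ?_ ?_
  · intro V _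
    exact Finset.mem_product.mpr ⟨Finset.mem_powerset.mpr (Finset.inter_subset_right),
      Finset.mem_powerset.mpr (Finset.inter_subset_right)⟩
  · intro p hp
    have h1 := Finset.mem_powerset.mp (Finset.mem_product.mp hp).1
    have h2 := Finset.mem_powerset.mp (Finset.mem_product.mp hp).2
    exact Finset.mem_powerset.mpr (Finset.union_subset
      (h1.trans Finset.subset_union_left) (h2.trans Finset.subset_union_right))
  · intro V hV
    have hVsub := Finset.mem_powerset.mp hV
    simp only
    rw [← Finset.inter_union_distrib_left]
    exact Finset.inter_eq_left.mpr hVsub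
  · intro p hp
    have h1 := Finset.mem_powerset.mp (Finset.mem_product.mp hp).1
    have h2 := Finset.mem_powerset.mp (Finset.mem_product.mp hp).2
    have d1 : p.2 ∩ s = ∅ :=
      Finset.disjoint_iff_inter_eq_empty.mp (hdisj.symm.mono_left h2)
    have d2 : p.1 ∩ t = ∅ :=
      Finset.disjoint_iff_inter_eq_empty.mp (hdisj.mono_left h1)
    have e1 : (p.1 ∪ p.2) ∩ s = p.1 := by
      rw [Finset.union_inter_distrib_right, Finset.inter_eq_left.mpr h1, d1,
        Finset.union_empty]
    have e2 : (p.1 ∪ p.2) ∩ t = p.2 := by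
      rw [Finset.union_inter_distrib_right, Finset.inter_eq_left.mpr h2, d2,
        Finset.empty_union]
    exact Prod.ext e1 e2
  · intro V hV
    have hVsub := Finset.mem_powerset.mp hV
    congr 1
    rw [← Finset.inter_union_distrib_left]
    exact (Finset.inter_eq_left.mpr hVsub).symm

end PowersetHelpers
section M1

variable {γ : Type*} {κ : Type*} [DecidableEq γ] [DecidableEq κ] [Fintype γ] [Fintype κ]

lemma block_identity (B : Matrix γ γ ℝ) (Y : Matrix γ κ ℝ) (X' : Matrix κ γ ℝ)
    (W : Matrix κ κ ℝ) :
    per (Matrix.fromBlocks B Y X' W)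
      = ∑ T' ∈ (Finset.univ : Finset γ).powerset,
          ∑ Vb ∈ (Finset.univ : Finset κ).powerset,
          (∑ T ∈ (Finset.univ : Finset γ).powerset,
            psub (fun a b => B a b) T T'
              * psub (fun a b => Y a b) (Finset.univ \ T) Vb)
          * (∑ U ∈ (Finset.univ : Finset κ).powerset,
            psub (fun a b => X' a b) U (Finset.univ \ T')
              * psub (fun a b => W a b) (Finset.univ \ U) (Finset.univ \ Vb)) := by
  classical
  set A := Matrix.fromBlocks B Y X' W with hA
  have htop : (Finset.univ : Finset (γ ⊕ κ))
      = ((Finset.univ : Finset γ).map ((Function.Embedding.inl : γ ↪ γ ⊕ κ)))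
        ∪ ((Finset.univ : Finset κ).map ((Function.Embedding.inr : κ ↪ γ ⊕ κ))) := by
    ext x; cases x <;> simp
  have hdisjlr : Disjoint ((Finset.univ : Finset γ).map ((Function.Embedding.inl : γ ↪ γ ⊕ κ)))
      ((Finset.univ : Finset κ).map ((Function.Embedding.inr : κ ↪ γ ⊕ κ))) := by
    rw [Finset.disjoint_left]
    rintro x hx hx'
    obtain ⟨a, _, ha⟩ := Finset.mem_map.mp hx
    obtain ⟨b, _, hb⟩ := Finset.mem_map.mp hx'
    rw [← ha] at hb
    exact Sum.inl_ne_inr hb.symm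
  have hbot : (Finset.univ : Finset (γ ⊕ κ))
        \ ((Finset.univ : Finset γ).map ((Function.Embedding.inl : γ ↪ γ ⊕ κ)))
      = ((Finset.univ : Finset κ).map ((Function.Embedding.inr : κ ↪ γ ⊕ κ))) := by
    ext x; cases x <;> simp
  rw [per_eq_psub]
  rw [psub_laplace_rows (fun i j => A i j)
    ((Finset.univ : Finset γ).map ((Function.Embedding.inl : γ ↪ γ ⊕ κ)))
    Finset.univ Finset.univ (Finset.subset_univ _)]
  have hsplitV : ∀ F : Finset (γ ⊕ κ) → ℝ,
      (∑ V ∈ (Finset.univ : Finset (γ ⊕ κ)).powerset, F V)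
        = ∑ T' ∈ (Finset.univ : Finset γ).powerset,
            ∑ Vb ∈ (Finset.univ : Finset κ).powerset,
              F ((T'.map (Function.Embedding.inl : γ ↪ γ ⊕ κ)) ∪ (Vb.map (Function.Embedding.inr : κ ↪ γ ⊕ κ))) := by
    intro F
    rw [htop, sum_powerset_union_disjoint _ _ hdisjlr, sum_powerset_map]
    refine Finset.sum_congr rfl fun T' _ => ?_
    rw [sum_powerset_map]
  rw [hsplitV]
  refine Finset.sum_congr rfl fun T' _ => Finset.sum_congr rfl fun Vb _ => ?_
  have hCm : ((T'.map (Function.Embedding.inl : γ ↪ γ ⊕ κ)) ∪ (Vb.map (Function.Embedding.inr : κ ↪ γ ⊕ κ)))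
        \ (T'.map (Function.Embedding.inl : γ ↪ γ ⊕ κ)) = Vb.map (Function.Embedding.inr : κ ↪ γ ⊕ κ) := by
    ext x
    cases x <;> simp
  have hcompl : (Finset.univ : Finset (γ ⊕ κ))
        \ ((T'.map (Function.Embedding.inl : γ ↪ γ ⊕ κ)) ∪ (Vb.map (Function.Embedding.inr : κ ↪ γ ⊕ κ)))
      = (((Finset.univ \ T') : Finset γ).map (Function.Embedding.inl : γ ↪ γ ⊕ κ))
        ∪ (((Finset.univ \ Vb) : Finset κ).map (Function.Embedding.inr : κ ↪ γ ⊕ κ)) := by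
    ext x
    cases x <;> simp
  congr 1
  · -- top factor
    rw [psub_laplace_cols (fun i j => A i j) (T'.map (Function.Embedding.inl : γ ↪ γ ⊕ κ))
      _ _ Finset.subset_union_left]
    rw [sum_powerset_map]
    refine Finset.sum_congr rfl fun T _ => ?_
    have h1 : psub (fun i j => A i j) (T.map (Function.Embedding.inl : γ ↪ γ ⊕ κ))
          (T'.map (Function.Embedding.inl : γ ↪ γ ⊕ κ)) = psub (fun a b => B a b) T T' := by
      rw [← psub_map (fun i j => A i j) (Function.Embedding.inl : γ ↪ γ ⊕ κ) (Function.Embedding.inl : γ ↪ γ ⊕ κ)]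
      exact psub_congr fun x _ y _ => rfl
    have h2 : ((Finset.univ : Finset γ).map (Function.Embedding.inl : γ ↪ γ ⊕ κ))
          \ (T.map (Function.Embedding.inl : γ ↪ γ ⊕ κ))
        = ((Finset.univ \ T) : Finset γ).map (Function.Embedding.inl : γ ↪ γ ⊕ κ) := by
      ext x; cases x <;> simp
    rw [h1, hCm, h2]
    congr 1
    rw [← psub_map (fun i j => A i j) (Function.Embedding.inl : γ ↪ γ ⊕ κ) (Function.Embedding.inr : κ ↪ γ ⊕ κ)]
    exact psub_congr fun x _ y _ => rfl
  · -- bottom factor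
    rw [hbot, hcompl]
    rw [psub_laplace_cols (fun i j => A i j)
      (((Finset.univ \ T') : Finset γ).map (Function.Embedding.inl : γ ↪ γ ⊕ κ))
      _ _ Finset.subset_union_left]
    have hCm2 : ((((Finset.univ \ T') : Finset γ).map (Function.Embedding.inl : γ ↪ γ ⊕ κ))
          ∪ (((Finset.univ \ Vb) : Finset κ).map (Function.Embedding.inr : κ ↪ γ ⊕ κ)))
          \ (((Finset.univ \ T') : Finset γ).map (Function.Embedding.inl : γ ↪ γ ⊕ κ))
        = ((Finset.univ \ Vb) : Finset κ).map (Function.Embedding.inr : κ ↪ γ ⊕ κ) := by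
      ext x; cases x <;> simp
    rw [hCm2, sum_powerset_map]
    refine Finset.sum_congr rfl fun U _ => ?_
    have h1 : psub (fun i j => A i j) (U.map (Function.Embedding.inr : κ ↪ γ ⊕ κ))
          (((Finset.univ \ T') : Finset γ).map (Function.Embedding.inl : γ ↪ γ ⊕ κ))
        = psub (fun a b => X' a b) U (Finset.univ \ T') := by
      rw [← psub_map (fun i j => A i j) (Function.Embedding.inr : κ ↪ γ ⊕ κ) (Function.Embedding.inl : γ ↪ γ ⊕ κ)]
      exact psub_congr fun x _ y _ => rfl
    have h2 : ((Finset.univ : Finset κ).map (Function.Embedding.inr : κ ↪ γ ⊕ κ))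
          \ (U.map (Function.Embedding.inr : κ ↪ γ ⊕ κ))
        = ((Finset.univ \ U) : Finset κ).map (Function.Embedding.inr : κ ↪ γ ⊕ κ) := by
      ext x; cases x <;> simp
    rw [h1, h2]
    congr 1
    rw [← psub_map (fun i j => A i j) (Function.Embedding.inr : κ ↪ γ ⊕ κ) (Function.Embedding.inr : κ ↪ γ ⊕ κ)]
    exact psub_congr fun x _ y _ => rfl

end M1
lemma sum_swap4 {A B C D : Type*} [Fintype A] [Fintype B] [Fintype C] [Fintype D]
    (F : A → B → C → D → ℝ) :
    ∑ a : A, ∑ b : B, ∑ c : C, ∑ d : D, F a b c d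
      = ∑ d : D, ∑ b : B, ∑ c : C, ∑ a : A, F a b c d := by
  calc ∑ a : A, ∑ b : B, ∑ c : C, ∑ d : D, F a b c d
      = ∑ a : A, ∑ b : B, ∑ d : D, ∑ c : C, F a b c d := by
        exact Finset.sum_congr rfl fun a _ => Finset.sum_congr rfl fun b _ =>
          Finset.sum_comm
    _ = ∑ a : A, ∑ d : D, ∑ b : B, ∑ c : C, F a b c d := by
        exact Finset.sum_congr rfl fun a _ => Finset.sum_comm
    _ = ∑ d : D, ∑ a : A, ∑ b : B, ∑ c : C, F a b c d := Finset.sum_comm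
    _ = ∑ d : D, ∑ b : B, ∑ a : A, ∑ c : C, F a b c d := by
        exact Finset.sum_congr rfl fun d _ => Finset.sum_comm
    _ = ∑ d : D, ∑ b : B, ∑ c : C, ∑ a : A, F a b c d := by
        exact Finset.sum_congr rfl fun d _ => Finset.sum_congr rfl fun b _ =>
          Finset.sum_comm

/-- Auxiliary general form of the permanental Schur inequality. -/
lemma schur_aux {γ : Type*} {κ : Type*} [DecidableEq γ] [DecidableEq κ]
    [Fintype γ] [Fintype κ]
    (B : Matrix γ γ ℝ) (X' : Matrix κ γ ℝ) (Y : Matrix γ κ ℝ) (W : Matrix κ κ ℝ)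
    (Bi : Matrix γ γ ℝ)
    (hB : ∀ i j, 0 ≤ B i j) (hX'nn : ∀ u i, 0 ≤ X' u i) (hY : ∀ i j, 0 ≤ Y i j)
    (hW : ∀ i j, 0 ≤ W i j) (hper : 0 < per B)
    (hBi : ∀ i j, Bi i j
      = psub (fun a b => B a b) (Finset.univ.erase j) (Finset.univ.erase i) / per B) :
    per (Matrix.fromBlocks B Y X' W) ≤ per B * per (W + X' * Bi * Y) := by
  classical
  set N := X' * Bi * Y with hNdef
  set adjM : γ → γ → ℝ :=
    fun i j => psub (fun a b => B a b) (Finset.univ.erase j) (Finset.univ.erase i)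
    with hadjMdef
  have hadjnn : ∀ i j, 0 ≤ adjM i j := fun i j => psub_nonneg hB _ _
  set Q : γ → κ → ℝ := fun i c => ∑ j : γ, adjM i j * Y j c with hQdef
  have hQnn : ∀ i c, 0 ≤ Q i c :=
    fun i c => Finset.sum_nonneg fun j _ => mul_nonneg (hadjnn i j) (hY j c)
  set Madj : κ → κ → ℝ := fun u c => ∑ i : γ, X' u i * Q i c with hMadjdef
  have hperB : psub (fun i j => B i j) Finset.univ Finset.univ = per B :=
    (per_eq_psub B).symm
  -- entry description of N
  have hMadj_apply : ∀ u c, Madj u c = ∑ i : γ, X' u i * Q i c := fun u c => rfl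
  have hQ_apply : ∀ i c, Q i c = ∑ j : γ, adjM i j * Y j c := fun i c => rfl
  have hN : ∀ b c, N b c = (per B)⁻¹ * Madj b c := by
    intro b c
    have h1 : N b c = ∑ j : γ, ∑ i : γ, X' b i * Bi i j * Y j c := by
      rw [hNdef, Matrix.mul_apply]
      refine Finset.sum_congr rfl fun j _ => ?_
      rw [Matrix.mul_apply, Finset.sum_mul]
    have h2 : (per B)⁻¹ * Madj b c
        = ∑ i : γ, ∑ j : γ, (per B)⁻¹ * (X' b i * (adjM i j * Y j c)) := by
      rw [hMadj_apply, Finset.mul_sum]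
      refine Finset.sum_congr rfl fun i _ => ?_
      rw [hQ_apply, Finset.mul_sum, Finset.mul_sum]
    rw [h1, h2, Finset.sum_comm]
    refine Finset.sum_congr rfl fun i _ => Finset.sum_congr rfl fun j _ => ?_
    have hpinv : Bi i j = adjM i j / per B := hBi i j
    rw [hpinv]
    ring
  have hpsubN : ∀ U V : Finset κ, psub (fun b c => N b c) U V
      = ((per B)⁻¹) ^ U.card * psub Madj U V := by
    intro U V
    rw [psub_congr (fun b _ c _ => hN b c), psub_smul]
  -- the key inequality
  have key : ∀ U V : Finset κ,
      ∑ T : Finset γ, ∑ T' : Finset γ,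
        psub (fun a b => B a b) T T' * psub (fun a b => Y a b) (Finset.univ \ T) V
          * psub (fun a b => X' a b) U (Finset.univ \ T')
        ≤ per B * psub (fun b c => N b c) U V := by
    intro U V
    have cb2 : ∀ S' : Finset γ,
        ∑ S : Finset γ, psub adjM S' S * psub (fun a b => Y a b) S V
          ≤ psub Q S' V := by
      intro S'
      have := psub_cauchy_binet adjM (fun a b => Y a b) hadjnn hY S' V
      exact this
    have cb1 : ∑ S' : Finset γ, psub (fun a b => X' a b) U S' * psub Q S' V
        ≤ psub Madj U V := by
      have := psub_cauchy_binet (fun a b => X' a b) Q hX'nn hQnn U V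
      exact this
    have step1 : ∑ S' : Finset γ, ∑ S : Finset γ,
        psub (fun a b => X' a b) U S' * (psub adjM S' S * psub (fun a b => Y a b) S V)
          ≤ psub Madj U V := by
      refine le_trans ?_ cb1
      refine Finset.sum_le_sum fun S' _ => ?_
      rw [← Finset.mul_sum]
      exact mul_le_mul_of_nonneg_left (cb2 S') (psub_nonneg hX'nn _ _)
    have hc2 : ∀ Z : Finset γ, Finset.univ \ Z = Zᶜ :=
      fun Z => (Finset.compl_eq_univ_sdiff Z).symm
    have reidx : ∑ T : Finset γ, ∑ T' : Finset γ,
        psub (fun a b => B a b) T T' * psub (fun a b => Y a b) (Finset.univ \ T) V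
          * psub (fun a b => X' a b) U (Finset.univ \ T')
        = ∑ S : Finset γ, ∑ S' : Finset γ,
        psub (fun a b => B a b) Sᶜ S'ᶜ * psub (fun a b => Y a b) S V
          * psub (fun a b => X' a b) U S' := by
      refine Fintype.sum_bijective (fun S : Finset γ => Sᶜ)
        compl_involutive.bijective _ _ (fun T => ?_)
      refine Fintype.sum_bijective (fun S' : Finset γ => S'ᶜ)
        compl_involutive.bijective _ _ (fun T' => ?_)
      rw [hc2, hc2, compl_compl, compl_compl]
    have tw : ∀ S S' : Finset γ,
        (per B) ^ U.card
            * (psub (fun a b => B a b) Sᶜ S'ᶜ * psub (fun a b => Y a b) S V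
              * psub (fun a b => X' a b) U S')
          ≤ psub (fun a b => X' a b) U S'
              * (psub adjM S' S * psub (fun a b => Y a b) S V) * per B := by
      intro S S'
      by_cases hSU : S.card = U.card
      · have l4 := L4 (fun i j => B i j) hB S.card S S' rfl
        rw [hperB] at l4
        calc (per B) ^ U.card
              * (psub (fun a b => B a b) Sᶜ S'ᶜ * psub (fun a b => Y a b) S V
                * psub (fun a b => X' a b) U S')
            = ((per B) ^ S.card * psub (fun a b => B a b) Sᶜ S'ᶜ)
              * (psub (fun a b => Y a b) S V * psub (fun a b => X' a b) U S') := by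
              rw [hSU]; ring
          _ ≤ (per B * psub adjM S' S)
              * (psub (fun a b => Y a b) S V * psub (fun a b => X' a b) U S') := by
              refine mul_le_mul_of_nonneg_right l4 ?_
              exact mul_nonneg (psub_nonneg hY _ _) (psub_nonneg hX'nn _ _)
          _ = psub (fun a b => X' a b) U S'
              * (psub adjM S' S * psub (fun a b => Y a b) S V) * per B := by ring
      · have hz : psub (fun a b => B a b) Sᶜ S'ᶜ * psub (fun a b => X' a b) U S' = 0 := by
          by_cases hS'U : S'.card = U.card
          · have hcc : Sᶜ.card ≠ S'ᶜ.card := by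
              rw [Finset.card_compl, Finset.card_compl]
              have h2 : S.card ≤ Fintype.card γ := Finset.card_le_univ _
              have h3 : S'.card ≤ Fintype.card γ := Finset.card_le_univ _
              omega
            rw [psub_of_card_ne hcc, zero_mul]
          · rw [psub_of_card_ne (fun h => hS'U h.symm), mul_zero]
        calc (per B) ^ U.card
              * (psub (fun a b => B a b) Sᶜ S'ᶜ * psub (fun a b => Y a b) S V
                * psub (fun a b => X' a b) U S')
            = (per B) ^ U.card * psub (fun a b => Y a b) S V
              * (psub (fun a b => B a b) Sᶜ S'ᶜ * psub (fun a b => X' a b) U S') := by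
              ring
          _ = 0 := by rw [hz, mul_zero]
          _ ≤ _ := mul_nonneg (mul_nonneg (psub_nonneg hX'nn _ _)
              (mul_nonneg (psub_nonneg hadjnn _ _) (psub_nonneg hY _ _)))
              (le_of_lt hper)
    -- combine
    refine le_of_mul_le_mul_left ?_ (pow_pos hper U.card)
    have h2 : (per B) ^ U.card * (per B * psub (fun b c => N b c) U V)
        = per B * psub Madj U V := by
      rw [hpsubN U V]
      have hinv : (per B)⁻¹ ^ U.card * (per B) ^ U.card = 1 := by
        rw [← mul_pow, inv_mul_cancel₀ (ne_of_gt hper), one_pow]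
      calc (per B) ^ U.card * (per B * ((per B)⁻¹ ^ U.card * psub Madj U V))
          = ((per B)⁻¹ ^ U.card * (per B) ^ U.card) * (per B * psub Madj U V) := by ring
        _ = per B * psub Madj U V := by rw [hinv, one_mul]
    rw [h2, reidx, Finset.mul_sum]
    calc ∑ S : Finset γ, (per B) ^ U.card * ∑ S' : Finset γ,
          psub (fun a b => B a b) Sᶜ S'ᶜ * psub (fun a b => Y a b) S V
            * psub (fun a b => X' a b) U S'
        = ∑ S : Finset γ, ∑ S' : Finset γ, (per B) ^ U.card
            * (psub (fun a b => B a b) Sᶜ S'ᶜ * psub (fun a b => Y a b) S V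
              * psub (fun a b => X' a b) U S') := by
          exact Finset.sum_congr rfl fun S _ => Finset.mul_sum _ _ _
      _ ≤ ∑ S : Finset γ, ∑ S' : Finset γ,
            psub (fun a b => X' a b) U S'
              * (psub adjM S' S * psub (fun a b => Y a b) S V) * per B := by
          exact Finset.sum_le_sum fun S _ => Finset.sum_le_sum fun S' _ => tw S S'
      _ = (∑ S' : Finset γ, ∑ S : Finset γ,
            psub (fun a b => X' a b) U S'
              * (psub adjM S' S * psub (fun a b => Y a b) S V)) * per B := by
          rw [Finset.sum_comm, Finset.sum_mul]
          exact Finset.sum_congr rfl fun S' _ => by rw [Finset.sum_mul]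
      _ ≤ psub Madj U V * per B := by
          exact mul_le_mul_of_nonneg_right step1 (le_of_lt hper)
      _ = per B * psub Madj U V := mul_comm _ _
  -- final assembly
  rw [block_identity B Y X' W, per_add_split W N]
  simp only [Finset.powerset_univ]
  calc ∑ T' : Finset γ, ∑ Vb : Finset κ,
        (∑ T : Finset γ, psub (fun a b => B a b) T T'
            * psub (fun a b => Y a b) (Finset.univ \ T) Vb)
        * ∑ U : Finset κ, psub (fun a b => X' a b) U (Finset.univ \ T')
            * psub (fun a b => W a b) (Finset.univ \ U) (Finset.univ \ Vb)
      = ∑ T' : Finset γ, ∑ Vb : Finset κ, ∑ T : Finset γ, ∑ U : Finset κ,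
          (psub (fun a b => B a b) T T'
            * psub (fun a b => Y a b) (Finset.univ \ T) Vb)
          * (psub (fun a b => X' a b) U (Finset.univ \ T')
            * psub (fun a b => W a b) (Finset.univ \ U) (Finset.univ \ Vb)) := by
        exact Finset.sum_congr rfl fun T' _ => Finset.sum_congr rfl fun Vb _ =>
          Finset.sum_mul_sum _ _ _ _
    _ = ∑ U : Finset κ, ∑ Vb : Finset κ, ∑ T : Finset γ, ∑ T' : Finset γ,
          (psub (fun a b => B a b) T T'
            * psub (fun a b => Y a b) (Finset.univ \ T) Vb)
          * (psub (fun a b => X' a b) U (Finset.univ \ T')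
            * psub (fun a b => W a b) (Finset.univ \ U) (Finset.univ \ Vb)) := by
        rw [sum_swap4 (fun (T' : Finset γ) (Vb : Finset κ) (T : Finset γ) (U : Finset κ) =>
          (psub (fun a b => B a b) T T'
            * psub (fun a b => Y a b) (Finset.univ \ T) Vb)
          * (psub (fun a b => X' a b) U (Finset.univ \ T')
            * psub (fun a b => W a b) (Finset.univ \ U) (Finset.univ \ Vb)))]
    _ ≤ per B * ∑ U : Finset κ, ∑ Vb : Finset κ,
          psub (fun b c => N b c) U Vb
            * psub (fun a b => W a b) (Finset.univ \ U) (Finset.univ \ Vb) := by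
        rw [Finset.mul_sum]
        refine Finset.sum_le_sum fun U _ => ?_
        rw [Finset.mul_sum]
        refine Finset.sum_le_sum fun Vb _ => ?_
        have hpull : ∑ T : Finset γ, ∑ T' : Finset γ,
            (psub (fun a b => B a b) T T'
              * psub (fun a b => Y a b) (Finset.univ \ T) Vb)
            * (psub (fun a b => X' a b) U (Finset.univ \ T')
              * psub (fun a b => W a b) (Finset.univ \ U) (Finset.univ \ Vb))
            = (∑ T : Finset γ, ∑ T' : Finset γ,
                psub (fun a b => B a b) T T'
                  * psub (fun a b => Y a b) (Finset.univ \ T) Vb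
                  * psub (fun a b => X' a b) U (Finset.univ \ T'))
              * psub (fun a b => W a b) (Finset.univ \ U) (Finset.univ \ Vb) := by
          rw [Finset.sum_mul]
          refine Finset.sum_congr rfl fun T _ => ?_
          rw [Finset.sum_mul]
          exact Finset.sum_congr rfl fun T' _ => by ring
        rw [hpull]
        calc (∑ T : Finset γ, ∑ T' : Finset γ,
                psub (fun a b => B a b) T T'
                  * psub (fun a b => Y a b) (Finset.univ \ T) Vb
                  * psub (fun a b => X' a b) U (Finset.univ \ T'))
              * psub (fun a b => W a b) (Finset.univ \ U) (Finset.univ \ Vb)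
            ≤ (per B * psub (fun b c => N b c) U Vb)
              * psub (fun a b => W a b) (Finset.univ \ U) (Finset.univ \ Vb) :=
              mul_le_mul_of_nonneg_right (key U Vb) (psub_nonneg hW _ _)
          _ = per B * (psub (fun b c => N b c) U Vb
              * psub (fun a b => W a b) (Finset.univ \ U) (Finset.univ \ Vb)) := by
              ring

/-- Permanental Schur's formula: `per(A) ≤ per(B) · per(W + Xᵀ B* Y)`. -/
theorem stmt2 {d k : ℕ} (B : Matrix (Fin (d + 1)) (Fin (d + 1)) ℝ)
    (X Y : Matrix (Fin (d + 1)) (Fin k) ℝ) (W : Matrix (Fin k) (Fin k) ℝ)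
    (hB : ∀ i j, 0 ≤ B i j) (hX : ∀ i j, 0 ≤ X i j) (hY : ∀ i j, 0 ≤ Y i j)
    (hW : ∀ i j, 0 ≤ W i j) (hper : 0 < per B) :
    per (Matrix.fromBlocks B Y Xᵀ W) ≤ per B * per (W + Xᵀ * pinv B * Y) := by
  refine schur_aux B Xᵀ Y W (pinv B) hB (fun u i => hX i u) hY hW hper ?_
  intro i j
  show per (B.submatrix (Fin.succAbove j) (Fin.succAbove i)) / per B = _
  rw [per_minor_eq_psub]
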